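/- Let n ≥ 2 and let T be a real symmetric n×n matrix with tr T = 0. Then |tr(T³)| ≤ ((n−2)/√(n(n−1))) · ‖T‖³. -/

import Mathlib

lemma huisken_scalar (n : ℕ) (hn : 2 ≤ n) (l : Fin n → ℝ)
    (h0 : ∑ i, l i = 0) (h2 : ∑ i, (l i) ^ 2 = 1) :
    ∑ i, (l i) ^ 3 ≤ ((n : ℝ) - 2) / Real.sqrt ((n : ℝ) * ((n : ℝ) - 1)) := by
  have hn2 : (2:ℝ) ≤ (n:ℝ) := by exact_mod_cast hn
  have hpos : (0:ℝ) < (n:ℝ) * ((n:ℝ) - 1) := by nlinarith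
  set s := Real.sqrt ((n : ℝ) * ((n : ℝ) - 1)) with hs
  have hspos : 0 < s := Real.sqrt_pos.mpr hpos
  have hs2 : s ^ 2 = (n:ℝ) * ((n:ℝ) - 1) := Real.sq_sqrt hpos.le
  set t := s⁻¹ with ht
  have htpos : 0 < t := by positivity
  have ht2 : t ^ 2 * ((n:ℝ) * ((n:ℝ) - 1)) = 1 := by
    rw [ht, ← hs2, inv_pow, inv_mul_cancel₀ (by positivity)]
  -- each l i ≤ (n-1) t
  have hbd : ∀ i, l i ≤ ((n:ℝ) - 1) * t := by
    intro i
    have hsum : ∑ j ∈ Finset.univ.erase i, l j = - l i := by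
      rw [Finset.sum_erase_eq_sub (Finset.mem_univ i), h0]; ring
    have hsq : ∑ j ∈ Finset.univ.erase i, (l j) ^ 2 = 1 - (l i) ^ 2 := by
      rw [Finset.sum_erase_eq_sub (Finset.mem_univ i), h2]
    have hcs := sq_sum_le_card_mul_sum_sq (s := Finset.univ.erase i) (f := l)
    rw [hsum, hsq, Finset.card_erase_of_mem (Finset.mem_univ i), Finset.card_univ,
      Fintype.card_fin] at hcs
    have hcard : ((n - 1 : ℕ) : ℝ) = (n:ℝ) - 1 := by
      have : 1 ≤ n := le_trans one_le_two hn
      push_cast [Nat.cast_sub this]; ring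
    rw [hcard] at hcs
    have hsq' : (l i) ^ 2 ≤ (((n:ℝ) - 1) * t) ^ 2 := by
      have h1 : (n:ℝ) * (l i)^2 ≤ (n:ℝ) - 1 := by nlinarith
      have h2' : ((n:ℝ)-1) * (t ^ 2 * ((n:ℝ) * ((n:ℝ) - 1))) = (n:ℝ)-1 := by rw [ht2, mul_one]
      nlinarith [h1, h2']
    nlinarith [sq_nonneg (l i - ((n:ℝ)-1)*t),
      mul_pos (sub_pos.mpr (by linarith : (1:ℝ) < (n:ℝ))) htpos]
  -- pointwise cubic bound
  have hcube : ∀ i, (l i) ^ 3 ≤ ((n:ℝ) - 3) * t * (l i)^2 + (2*(n:ℝ) - 3) * t^2 * (l i)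
      + ((n:ℝ) - 1) * t^3 := by
    intro i
    nlinarith [mul_nonneg (sq_nonneg (l i + t)) (sub_nonneg.mpr (hbd i))]
  calc ∑ i, (l i)^3 ≤ ∑ i, (((n:ℝ) - 3) * t * (l i)^2 + (2*(n:ℝ) - 3) * t^2 * (l i)
      + ((n:ℝ) - 1) * t^3) := Finset.sum_le_sum (fun i _ => hcube i)
    _ = ((n:ℝ) - 3) * t + (n:ℝ) * (((n:ℝ) - 1) * t^3) := by
        rw [Finset.sum_add_distrib, Finset.sum_add_distrib, ← Finset.mul_sum, ← Finset.mul_sum,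
          h0, h2, Finset.sum_const, Finset.card_univ, Fintype.card_fin]
        ring
    _ = ((n:ℝ) - 2) * t := by linear_combination t * ht2
    _ = ((n:ℝ) - 2) / s := by rw [ht, div_eq_mul_inv]

lemma huisken_abs (n : ℕ) (hn : 2 ≤ n) (l : Fin n → ℝ) (h0 : ∑ i, l i = 0) :
    |∑ i, (l i) ^ 3| ≤ ((n : ℝ) - 2) / Real.sqrt ((n : ℝ) * ((n : ℝ) - 1)) *
      (Real.sqrt (∑ i, (l i) ^ 2)) ^ 3 := by
  have hn2 : (2:ℝ) ≤ (n:ℝ) := by exact_mod_cast hn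
  have hc : 0 ≤ ((n:ℝ) - 2) / Real.sqrt ((n : ℝ) * ((n : ℝ) - 1)) :=
    div_nonneg (by linarith) (Real.sqrt_nonneg _)
  have hS : (0:ℝ) ≤ ∑ i, (l i) ^ 2 := by positivity
  rcases hS.eq_or_lt with h | h
  · have hz : ∀ i ∈ Finset.univ, (l i) ^ 2 = 0 :=
      (Finset.sum_eq_zero_iff_of_nonneg (fun i _ => sq_nonneg _)).mp h.symm
    have hz' : ∀ i, l i = 0 := fun i =>
      pow_eq_zero_iff (two_ne_zero) |>.mp (hz i (Finset.mem_univ i))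
    simp only [hz']
    simp
  · set S := ∑ i, (l i) ^ 2 with hSdef
    set r := Real.sqrt S with hr
    have hrpos : 0 < r := Real.sqrt_pos.mpr h
    have hr2 : r ^ 2 = S := Real.sq_sqrt h.le
    set m : Fin n → ℝ := fun i => l i / r with hm
    have hm0 : ∑ i, m i = 0 := by
      simp only [hm, ← Finset.sum_div, h0, zero_div]
    have hm2 : ∑ i, (m i) ^ 2 = 1 := by
      simp only [hm, div_pow, ← Finset.sum_div, ← hSdef]
      rw [hr2]
      exact div_self h.ne'
    have hup := huisken_scalar n hn m hm0 hm2
    have hdn : - ∑ i, (m i) ^ 3 ≤ ((n:ℝ) - 2) / Real.sqrt ((n : ℝ) * ((n : ℝ) - 1)) := by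
      have hd := huisken_scalar n hn (fun i => - m i)
        (by show ∑ i, -(m i) = 0; rw [Finset.sum_neg_distrib, hm0, neg_zero])
        (by show ∑ i, (-(m i)) ^ 2 = 1; simp only [neg_sq]; exact hm2)
      calc - ∑ i, (m i) ^ 3 = ∑ i, (-(m i)) ^ 3 := by
            rw [← Finset.sum_neg_distrib]
            exact Finset.sum_congr rfl fun i _ => by ring
        _ ≤ _ := hd
    have habs : |∑ i, (m i) ^ 3| ≤ ((n:ℝ) - 2) / Real.sqrt ((n : ℝ) * ((n : ℝ) - 1)) :=
      abs_le.mpr ⟨by linarith, hup⟩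
    have hl : ∀ i, l i = m i * r := fun i => (div_mul_cancel₀ _ hrpos.ne').symm
    have hsum3 : ∑ i, (l i) ^ 3 = (∑ i, (m i) ^ 3) * r ^ 3 := by
      rw [Finset.sum_mul]
      exact Finset.sum_congr rfl (fun i _ => by rw [hl i, mul_pow])
    calc |∑ i, (l i) ^ 3| = |∑ i, (m i) ^ 3| * r ^ 3 := by
          rw [hsum3, abs_mul, abs_pow, abs_of_pos hrpos]
      _ ≤ ((n:ℝ) - 2) / Real.sqrt ((n : ℝ) * ((n : ℝ) - 1)) * r ^ 3 :=
          mul_le_mul_of_nonneg_right habs (by positivity)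

lemma trace_pow_eq_sum_eigenvalues (n : ℕ) (T : Matrix (Fin n) (Fin n) ℝ)
    (hH : T.IsHermitian) (k : ℕ) :
    (T ^ k).trace = ∑ i, (hH.eigenvalues i) ^ k := by
  set U : Matrix (Fin n) (Fin n) ℝ := (hH.eigenvectorUnitary : Matrix (Fin n) (Fin n) ℝ) with hU
  set D : Matrix (Fin n) (Fin n) ℝ := Matrix.diagonal (RCLike.ofReal ∘ hH.eigenvalues) with hD
  have hUU : star U * U = 1 := Matrix.mem_unitaryGroup_iff'.mp hH.eigenvectorUnitary.2
  have hUU' : U * star U = 1 := Matrix.mem_unitaryGroup_iff.mp hH.eigenvectorUnitary.2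
  have hpow : T ^ k = U * D ^ k * star U := by
    induction k with
    | zero => simpa using hUU'.symm
    | succ m ih =>
      calc T ^ (m+1) = (U * D ^ m * star U) * (U * D * star U) := by
            rw [pow_succ, ih]; congr 1; exact hH.spectral_theorem
        _ = U * D ^ (m+1) * star U := by
            rw [pow_succ]
            simp only [Matrix.mul_assoc]
            rw [← Matrix.mul_assoc (star U) U, hUU, Matrix.one_mul]
  rw [hpow, Matrix.trace_mul_cycle, hUU, Matrix.one_mul,
    hD, Matrix.diagonal_pow, Matrix.trace_diagonal]
  simp

/-- Huisken's inequality for trace-free symmetric matrices: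
`|tr(T³)| ≤ ((n−2)/√(n(n−1))) ‖T‖³` with `‖T‖` the Frobenius norm. -/
theorem stmt_0 (n : ℕ) (hn : 2 ≤ n) (T : Matrix (Fin n) (Fin n) ℝ)
    (hsymm : T.IsSymm) (htr : T.trace = 0) :
    |(T ^ 3).trace| ≤
      ((n : ℝ) - 2) / Real.sqrt ((n : ℝ) * ((n : ℝ) - 1)) *
        (Real.sqrt (∑ i, ∑ j, (T i j) ^ 2)) ^ 3 := by
  have hH : T.IsHermitian := by
    rwa [Matrix.IsHermitian, Matrix.conjTranspose_eq_transpose_of_trivial]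
  have h1 := trace_pow_eq_sum_eigenvalues n T hH 1
  simp only [pow_one, htr] at h1
  have h2 := trace_pow_eq_sum_eigenvalues n T hH 2
  have h3 := trace_pow_eq_sum_eigenvalues n T hH 3
  have hfrob : ∑ i, ∑ j, (T i j) ^ 2 = (T ^ 2).trace := by
    rw [pow_two, Matrix.trace]
    simp only [Matrix.diag, Matrix.mul_apply]
    congr 1; ext i; congr 1; ext j
    rw [sq, hsymm.apply]
  rw [h3, hfrob, h2]
  exact huisken_abs n hn _ h1.symm
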